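/- Transition probability to an interior state: suppose the demands D1 and D2 are independent ℕ-valued random variables with probability mass functions p1 and p2, and let j1, j2 be naturals with a01 < j1 ≤ s1 + a01 − a12 and a02 + a12 < j2 ≤ s2 + a02 + a12. Then the probability that the next state equals (j1, j2) is p1(s1 − a12 − (j1 − a01)) · p2(s2 − (j2 − a02 − a12)) + [if s2 ≥ (j1 − a01) + (j2 − a02 − a12) then p1(s1 − a12 + (j1 − a01)) · p2(s2 − (j1 − a01) − (j2 − a02 − a12)) else 0]. -/

import Mathlib

/-- The product PMF of two PMFs on `ℕ`, giving the joint law of independent demands. -/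
noncomputable def demandProdPMF (p1 p2 : PMF ℕ) : PMF (ℕ × ℕ) :=
  p1.bind fun d1 => p2.map fun d2 => (d1, d2)

/-- The SA-MCD transition map sending a realized demand pair to the next state
(natural-number arithmetic, where subtraction is truncated, matching `max 0 ·`). -/
def samcdTransition (s1 s2 a01 a02 a12 : ℕ) : ℕ × ℕ → ℕ × ℕ := fun d =>
  let L1 := s1 + a01 - a12 - min (s1 - a12) d.1
  let L2 := s2 + a02 + a12 - min s2 d.2
  let B := min (d.1 - (s1 - a12)) (s2 - d.2)
  (L1 + B, L2 - B)

lemma demandProdPMF_apply (p1 p2 : PMF ℕ) (x : ℕ × ℕ) :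
    demandProdPMF p1 p2 x = p1 x.1 * p2 x.2 := by
  obtain ⟨a, b⟩ := x
  simp only [demandProdPMF, PMF.bind_apply, PMF.map_apply, Prod.mk.injEq]
  rw [tsum_eq_single a]
  · simp only [true_and]
    rw [tsum_eq_single b] <;> simp +contextual [eq_comm]
  · intro d1 hd1
    simp [Ne.symm hd1]

lemma samcd_fiber (s1 s2 a01 a02 a12 : ℕ) (ha12le : a12 ≤ s1)
    (j1 j2 : ℕ) (hj1l : a01 < j1) (hj1u : j1 ≤ s1 + a01 - a12)
    (hj2l : a02 + a12 < j2) (hj2u : j2 ≤ s2 + a02 + a12) (d : ℕ × ℕ) :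
    ((j1, j2) = samcdTransition s1 s2 a01 a02 a12 d) ↔
      (d = ((s1 - a12 - (j1 - a01), s2 - (j2 - a02 - a12)) : ℕ × ℕ) ∨
       ((j1 - a01) + (j2 - a02 - a12) ≤ s2 ∧
        d = ((s1 - a12 + (j1 - a01), s2 - (j1 - a01) - (j2 - a02 - a12)) : ℕ × ℕ))) := by
  obtain ⟨d1, d2⟩ := d
  simp only [samcdTransition, Prod.mk.injEq]
  omega

/-- Transition probability to an interior state `(j1, j2)` with
`a01 < j1 ≤ s1 + a01 − a12` and `a02 + a12 < j2 ≤ s2 + a02 + a12`: it equals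
`p1 (s1 − a12 − (j1 − a01)) * p2 (s2 − (j2 − a02 − a12))` plus, when
`s2 ≥ (j1 − a01) + (j2 − a02 − a12)`, the term
`p1 (s1 − a12 + (j1 − a01)) * p2 (s2 − (j1 − a01) − (j2 − a02 − a12))`. -/
theorem samcd_interior_transition_prob
    (M s1 s2 a01 a02 a12 : ℕ)
    (hstate : s1 + s2 ≤ M) (ha12le : a12 ≤ s1) (hact : a01 + a02 ≤ M - s1 - s2)
    (p1 p2 : PMF ℕ) (j1 j2 : ℕ)
    (hj1l : a01 < j1) (hj1u : j1 ≤ s1 + a01 - a12)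
    (hj2l : a02 + a12 < j2) (hj2u : j2 ≤ s2 + a02 + a12) :
    ((demandProdPMF p1 p2).map (samcdTransition s1 s2 a01 a02 a12)) (j1, j2) =
      p1 (s1 - a12 - (j1 - a01)) * p2 (s2 - (j2 - a02 - a12)) +
        (if (j1 - a01) + (j2 - a02 - a12) ≤ s2 then
          p1 (s1 - a12 + (j1 - a01)) * p2 (s2 - (j1 - a01) - (j2 - a02 - a12))
        else 0) := by
  classical
  have key := samcd_fiber s1 s2 a01 a02 a12 ha12le j1 j2 hj1l hj1u hj2l hj2u
  have hx01 : ((s1 - a12 - (j1 - a01), s2 - (j2 - a02 - a12)) : ℕ × ℕ) ≠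
      (s1 - a12 + (j1 - a01), s2 - (j1 - a01) - (j2 - a02 - a12)) := by
    simp only [ne_eq, Prod.mk.injEq, not_and]
    omega
  rw [PMF.map_apply]
  have hsum : (∑' a : ℕ × ℕ,
        @ite ENNReal ((j1, j2) = samcdTransition s1 s2 a01 a02 a12 a)
          (Classical.propDecidable _) ((demandProdPMF p1 p2) a) 0)
      = ∑' d : ℕ × ℕ,
        ((if d = ((s1 - a12 - (j1 - a01), s2 - (j2 - a02 - a12)) : ℕ × ℕ) then
            p1 (s1 - a12 - (j1 - a01)) * p2 (s2 - (j2 - a02 - a12)) else 0)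
          + (if ((j1 - a01) + (j2 - a02 - a12) ≤ s2 ∧
              d = ((s1 - a12 + (j1 - a01), s2 - (j1 - a01) - (j2 - a02 - a12)) : ℕ × ℕ)) then
            p1 (s1 - a12 + (j1 - a01)) * p2 (s2 - (j1 - a01) - (j2 - a02 - a12)) else 0)) := by
    refine tsum_congr fun d => ?_
    by_cases h0 : d = ((s1 - a12 - (j1 - a01), s2 - (j2 - a02 - a12)) : ℕ × ℕ)
    · rw [if_pos ((key d).2 (Or.inl h0)), if_pos h0, if_neg, demandProdPMF_apply, h0, add_zero]
      rintro ⟨-, h⟩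
      exact hx01 (h0 ▸ h)
    · by_cases h1 : (j1 - a01) + (j2 - a02 - a12) ≤ s2 ∧
          d = ((s1 - a12 + (j1 - a01), s2 - (j1 - a01) - (j2 - a02 - a12)) : ℕ × ℕ)
      · rw [if_pos ((key d).2 (Or.inr h1)), if_neg h0, if_pos h1, demandProdPMF_apply, h1.2,
          zero_add]
      · rw [if_neg (fun h => by rcases (key d).1 h with h | h <;> [exact h0 h; exact h1 h]),
          if_neg h0, if_neg h1, add_zero]
  rw [hsum, ENNReal.tsum_add]
  congr 1
  · exact tsum_ite_eq ((s1 - a12 - (j1 - a01), s2 - (j2 - a02 - a12)) : ℕ × ℕ)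
      (fun _ => p1 (s1 - a12 - (j1 - a01)) * p2 (s2 - (j2 - a02 - a12)))
  · by_cases hc : (j1 - a01) + (j2 - a02 - a12) ≤ s2
    · simp only [hc, true_and, if_pos hc, if_true]
      exact tsum_ite_eq ((s1 - a12 + (j1 - a01), s2 - (j1 - a01) - (j2 - a02 - a12)) : ℕ × ℕ)
        (fun _ => p1 (s1 - a12 + (j1 - a01)) * p2 (s2 - (j1 - a01) - (j2 - a02 - a12)))
    · simp [hc]
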